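/- Let f : [0,∞) → ℝ, let x_{ij} ≥ 0, p_{ij} > 0 with ∑_j p_{ij} = 1 for each i = 1,...,k, q_i > 0 with ∑ q_i = 1. If m̃ ≤ f(∑_i q_i x_{i j_i}) ≤ M̃ for all choices of indices, then |T_k| ≤ ((M̃ - m̃)/2)·∑_{j_1,...,j_k} p_{1j_1}···p_{kj_k} |∑_i q_i x_{i j_i} - x̄|, where T_k = ∑_{j_1,...,j_k} p_{1j_1}···p_{kj_k} (∑_i q_i(x_{i j_i} - ∑_j p_{ij}x_{ij})) f(∑_i q_i x_{i j_i}) and x̄ = ∑_i q_i ∑_j p_{ij}x_{ij}. -/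

import Mathlib

open Finset

theorem chebychev_functional_bound (f : ℝ → ℝ)
    (k : ℕ) (ι : Fin k → Type*) [∀ i, Fintype (ι i)]
    (x p : (i : Fin k) → ι i → ℝ) (q : Fin k → ℝ)
    (hx : ∀ i j, 0 ≤ x i j) (hp : ∀ i j, 0 < p i j)
    (hp1 : ∀ i, ∑ j, p i j = 1)
    (hq : ∀ i, 0 < q i) (hq1 : ∑ i, q i = 1)
    (mt Mt : ℝ)
    (hbound : ∀ t : (i : Fin k) → ι i,
      mt ≤ f (∑ i, q i * x i (t i)) ∧ f (∑ i, q i * x i (t i)) ≤ Mt) :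
    let xbar := ∑ i, q i * ∑ j, p i j * x i j
    |∑ t : (i : Fin k) → ι i, (∏ i, p i (t i)) *
        ((∑ i, q i * (x i (t i) - ∑ j, p i j * x i j)) * f (∑ i, q i * x i (t i)))| ≤
      (Mt - mt) / 2 *
        ∑ t : (i : Fin k) → ι i, (∏ i, p i (t i)) * |(∑ i, q i * x i (t i)) - xbar| := by
  intro xbar
  classical
  set S : ((i : Fin k) → ι i) → ℝ := fun t => ∑ i, q i * x i (t i) with hS
  set a : ((i : Fin k) → ι i) → ℝ := fun t => ∏ i, p i (t i) with ha
  have ha_pos : ∀ t, 0 < a t := fun t => Finset.prod_pos (fun i _ => hp i (t i))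
  have hsum_a : ∑ t, a t = 1 := by
    rw [ha, ← Fintype.prod_sum]
    simp [hp1]
  have hmarg : ∀ i₀, ∑ t : (i : Fin k) → ι i, a t * x i₀ (t i₀) = ∑ j, p i₀ j * x i₀ j := by
    intro i₀
    have key : ∀ t : (i : Fin k) → ι i, a t * x i₀ (t i₀)
        = ∏ i, (p i (t i) * Function.update (fun i (_ : ι i) => (1:ℝ)) i₀ (x i₀) i (t i)) := by
      intro t
      rw [Finset.prod_mul_distrib]
      congr 1
      rw [Finset.prod_eq_single i₀]
      · simp
      · intro b _ hb; simp [Function.update_of_ne hb]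
      · simp
    simp_rw [key]
    rw [← Fintype.prod_sum (fun i (j : ι i) => p i j * Function.update (fun i (_ : ι i) => (1:ℝ)) i₀ (x i₀) i j)]
    rw [Finset.prod_eq_single i₀]
    · simp
    · intro b _ hb
      simp [Function.update_of_ne hb, hp1 b]
    · simp
  have hmean : ∑ t, a t * S t = xbar := by
    simp only [hS, Finset.mul_sum]
    rw [Finset.sum_comm]
    refine Finset.sum_congr rfl fun i _ => ?_
    have : ∑ t, a t * (q i * x i (t i)) = q i * ∑ t, a t * x i (t i) := by
      rw [Finset.mul_sum]; refine Finset.sum_congr rfl fun t _ => by ring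
    rw [this, hmarg i]
  have hinner : ∀ t, (∑ i, q i * (x i (t i) - ∑ j, p i j * x i j)) = S t - xbar := by
    intro t
    simp only [mul_sub, Finset.sum_sub_distrib, hS]
    rfl
  set c : ℝ := (Mt + mt) / 2 with hc
  have hcenter : ∑ t, a t * (S t - xbar) = 0 := by
    simp only [mul_sub, Finset.sum_sub_distrib, hmean, ← Finset.sum_mul, hsum_a, one_mul,
      sub_self]
  have hsplit : ∑ t : (i : Fin k) → ι i, a t *
      ((∑ i, q i * (x i (t i) - ∑ j, p i j * x i j)) * f (S t))
      = ∑ t, a t * ((S t - xbar) * (f (S t) - c)) := by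
    have : ∑ t, a t * ((S t - xbar) * (f (S t) - c))
        = ∑ t, (a t * ((S t - xbar) * f (S t)) - c * (a t * (S t - xbar))) := by
      refine Finset.sum_congr rfl fun t _ => by ring
    rw [this, Finset.sum_sub_distrib, ← Finset.mul_sum, hcenter, mul_zero, sub_zero]
    refine Finset.sum_congr rfl fun t _ => by rw [hinner t]
  rw [hsplit]
  calc |∑ t, a t * ((S t - xbar) * (f (S t) - c))|
      ≤ ∑ t, |a t * ((S t - xbar) * (f (S t) - c))| := Finset.abs_sum_le_sum_abs _ _
    _ ≤ ∑ t, a t * |S t - xbar| * ((Mt - mt) / 2) := by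
        refine Finset.sum_le_sum fun t _ => ?_
        rw [abs_mul, abs_mul, abs_of_pos (ha_pos t), mul_assoc]
        refine mul_le_mul_of_nonneg_left ?_ (ha_pos t).le
        refine mul_le_mul_of_nonneg_left ?_ (abs_nonneg _)
        rw [abs_le]
        obtain ⟨h1, h2⟩ := hbound t
        constructor <;> [skip; skip] <;> simp only [hc] <;> linarith
    _ = (Mt - mt) / 2 * ∑ t, a t * |S t - xbar| := by
        rw [Finset.mul_sum]; refine Finset.sum_congr rfl fun t _ => by ring
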